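/- Let k ≥ 1 and let Z be a multiset of 2k complex numbers consisting of k conjugate pairs {z_1, z̄_1, ..., z_k, z̄_k} with Re(z_i) ≥ 0 for all i. Then for every j with 1 ≤ j ≤ 2k, the j-th elementary symmetric function e_j(Z) = ∑_{J ⊆ Z, |J| = j} ∏_{z ∈ J} z is a real number and is nonnegative. -/

import Mathlib

open Polynomial

/-- A product of polynomials with nonnegative coefficients has nonnegative coefficients. -/
lemma coeff_prod_nonneg {ι : Type*} (s : Finset ι) (p : ι → Polynomial ℝ)
    (h : ∀ i ∈ s, ∀ n, 0 ≤ (p i).coeff n) : ∀ n, 0 ≤ (∏ i ∈ s, p i).coeff n := by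
  classical
  have := Finset.prod_induction p (fun q => ∀ n, 0 ≤ q.coeff n)
    (fun a b ha hb n => by
      rw [Polynomial.coeff_mul]
      exact Finset.sum_nonneg fun x _ => mul_nonneg (ha _) (hb _))
    (fun n => by rcases n with _ | n <;> simp [Polynomial.coeff_one]) h
  exact this

/-- Let `k ≥ 1` and let `Z` be the multiset of `2k` complex numbers
consisting of the conjugate pairs `{z i, conj (z i)}` for `i : Fin k`, where each `z i`
has nonnegative real part. Then for every `1 ≤ j ≤ 2k` the `j`-th elementary symmetric
function of `Z` is a (nonnegative) real number. -/
theorem stmt0 (k : ℕ) (hk : 1 ≤ k) (z : Fin k → ℂ)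
    (hre : ∀ i, 0 ≤ (z i).re)
    (Z : Multiset ℂ)
    (hZ : Z = ∑ i : Fin k, ({z i, (starRingEnd ℂ) (z i)} : Multiset ℂ)) :
    ∀ j : ℕ, 1 ≤ j → j ≤ 2 * k →
      ∃ r : ℝ, 0 ≤ r ∧ Z.esymm j = (r : ℂ) := by
  intro j hj1 hj2
  set P : Polynomial ℝ :=
    ∏ i : Fin k, (X ^ 2 + C (2 * (z i).re) * X + C (Complex.normSq (z i))) with hP
  have hPnn : ∀ n, 0 ≤ P.coeff n := by
    refine coeff_prod_nonneg _ _ (fun i _ n => ?_)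
    have h1 : 0 ≤ 2 * (z i).re := by have := hre i; linarith
    have h2 : 0 ≤ Complex.normSq (z i) := Complex.normSq_nonneg _
    rcases n with _ | _ | _ | n <;>
      simp [Polynomial.coeff_add, Polynomial.coeff_C, Polynomial.coeff_X,
        Polynomial.coeff_C_mul, Polynomial.coeff_X_pow, h1, h2]
  have hcard : Multiset.card Z = 2 * k := by
    rw [hZ, Multiset.card_sum]
    simp [two_mul, mul_comm]
  have hmap : (Z.map fun r => X + C r).prod = P.map (algebraMap ℝ ℂ) := by
    rw [hZ, hP]
    rw [Polynomial.map_prod]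
    rw [show (Multiset.map (fun r => X + C r) (∑ i : Fin k, ({z i, (starRingEnd ℂ) (z i)} : Multiset ℂ)))
        = ∑ i : Fin k, Multiset.map (fun r => X + C r) ({z i, (starRingEnd ℂ) (z i)} : Multiset ℂ) by
      exact map_sum (Multiset.mapAddMonoidHom fun r => X + C r) _ _]
    rw [Multiset.prod_sum]
    refine Finset.prod_congr rfl fun i _ => ?_
    simp only [Multiset.insert_eq_cons, Multiset.map_cons, Multiset.map_singleton,
      Multiset.prod_cons, Multiset.prod_singleton]
    rw [Polynomial.map_add, Polynomial.map_add, Polynomial.map_mul, Polynomial.map_pow,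
      Polynomial.map_X, Polynomial.map_C, Polynomial.map_C]
    have hadd : (algebraMap ℝ ℂ) (2 * (z i).re) = z i + (starRingEnd ℂ) (z i) := by
      rw [Complex.coe_algebraMap, Complex.add_conj]
    have hmul : (algebraMap ℝ ℂ) (Complex.normSq (z i)) = z i * (starRingEnd ℂ) (z i) := by
      rw [Complex.coe_algebraMap, Complex.mul_conj]
    rw [hadd, hmul, C_add, C_mul]; ring
  have hco : Z.esymm j = ((Z.map fun r => X + C r).prod).coeff (2 * k - j) := by
    rw [Multiset.prod_X_add_C_coeff Z (by omega : 2 * k - j ≤ Multiset.card Z), hcard]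
    congr 1
    omega
  refine ⟨P.coeff (2 * k - j), hPnn _, ?_⟩
  rw [hco, hmap, Polynomial.coeff_map]
  rfl
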